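/- arXiv:1708.00978 — 3 statements merged into one kernel-verified Lean document; each statement's English description precedes it below -/
import Mathlib

section
/- Let ρ be an n×n density matrix (positive semidefinite, trace 1) with eigenvalues λ_1,...,λ_n, and let f be a regular symmetric normalized operator monotone function (f(0)>0, f(1)=1, f(t)=t·f(1/t)). Define Q^f(ρ) = (f(0)/2) ∑_{k,l=1}^n (λ_k − λ_l)²/m^f(λ_k, λ_l) (terms with λ_k = λ_l = 0 interpreted as 0), where m^f(x,y) = x·f(y/x). Then 0 ≤ Q^f(ρ) ≤ n − 1. -/
open scoped ComplexOrder Matrix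

/-- `f` is operator monotone (on positive semidefinite matrices), via the
functional calculus for Hermitian matrices. -/
def OperatorMonotone (f : ℝ → ℝ) : Prop :=
  ∀ (n : ℕ) (A B : Matrix (Fin n) (Fin n) ℂ) (hA : A.PosSemidef) (hB : B.PosSemidef),
    (B - A).PosSemidef → (hB.1.cfc f - hA.1.cfc f).PosSemidef

/-- The mean `m^f(x,y) = x·f(y/x)` adjusted by `f`, extended by continuity
(using the symmetry of `f`) to the boundary: `m^f(0,y) = y·f(0)`. -/
noncomputable def adjustedMean (f : ℝ → ℝ) (x y : ℝ) : ℝ :=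
  if x = 0 then y * f 0 else x * f (y / x)

/-- The quantum uncertainty measure `Q^f(ρ)` in its spectral form. -/
noncomputable def Qf (f : ℝ → ℝ) {n : ℕ} (ρ : Matrix (Fin n) (Fin n) ℂ)
    (hρ : ρ.IsHermitian) : ℝ :=
  (f 0 / 2) * ∑ k, ∑ l,
    (hρ.eigenvalues k - hρ.eigenvalues l) ^ 2
      / adjustedMean f (hρ.eigenvalues k) (hρ.eigenvalues l)

/-- The trace of `hA.cfc f` is the sum of the values of `f` on the eigenvalues. -/
lemma trace_cfc_aux {m : ℕ} {A : Matrix (Fin m) (Fin m) ℂ} (hA : A.IsHermitian) (f : ℝ → ℝ) :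
    (hA.cfc f).trace = ∑ i, (f (hA.eigenvalues i) : ℂ) := by
  rw [Matrix.IsHermitian.cfc, Unitary.conjStarAlgAut_apply, Matrix.trace_mul_cycle]
  rw [show (star (hA.eigenvectorUnitary : Matrix (Fin m) (Fin m) ℂ)) *
      (hA.eigenvectorUnitary : Matrix (Fin m) (Fin m) ℂ) = 1 from
    (Matrix.mem_unitaryGroup_iff').mp hA.eigenvectorUnitary.2, one_mul, Matrix.trace_diagonal]
  rfl

/-- The trace of a Hermitian matrix is the sum of its eigenvalues. -/
lemma trace_eq_sum_eig_aux {m : ℕ} {A : Matrix (Fin m) (Fin m) ℂ} (hA : A.IsHermitian) :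
    A.trace = ∑ i, (hA.eigenvalues i : ℂ) := by
  conv_lhs => rw [hA.spectral_theorem]
  rw [Unitary.conjStarAlgAut_apply, Matrix.trace_mul_cycle]
  rw [show (star (hA.eigenvectorUnitary : Matrix (Fin m) (Fin m) ℂ)) *
      (hA.eigenvectorUnitary : Matrix (Fin m) (Fin m) ℂ) = 1 from
    (Matrix.mem_unitaryGroup_iff').mp hA.eigenvectorUnitary.2, one_mul, Matrix.trace_diagonal]
  rfl

/-- Operator monotone functions are monotone on `[0, ∞)` as scalar functions. -/
lemma scalar_mono_aux {f : ℝ → ℝ} (hf : OperatorMonotone f) {a b : ℝ} (ha : 0 ≤ a)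
    (hab : a ≤ b) : f a ≤ f b := by
  set A : Matrix (Fin 1) (Fin 1) ℂ := Matrix.diagonal (fun _ => (a:ℂ)) with hAdef
  set B : Matrix (Fin 1) (Fin 1) ℂ := Matrix.diagonal (fun _ => (b:ℂ)) with hBdef
  have hA : A.PosSemidef := Matrix.PosSemidef.diagonal (by
    intro i; exact Complex.zero_le_real.mpr ha)
  have hB : B.PosSemidef := Matrix.PosSemidef.diagonal (by
    intro i; exact Complex.zero_le_real.mpr (ha.trans hab))
  have hBA : (B - A).PosSemidef := by
    rw [hAdef, hBdef, Matrix.diagonal_sub]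
    exact Matrix.PosSemidef.diagonal (by
      intro i; simp only [Pi.sub_apply, ← Complex.ofReal_sub]
      exact Complex.zero_le_real.mpr (by linarith))
  have key := hf 1 A B hA hB hBA
  have heigA : hA.1.eigenvalues 0 = a := by
    have := trace_eq_sum_eig_aux hA.1
    simp [hAdef, Matrix.trace, Fin.sum_univ_one, Matrix.diagonal] at this
    exact_mod_cast this.symm
  have heigB : hB.1.eigenvalues 0 = b := by
    have := trace_eq_sum_eig_aux hB.1
    simp [hBdef, Matrix.trace, Fin.sum_univ_one, Matrix.diagonal] at this
    exact_mod_cast this.symm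
  have htr : (hB.1.cfc f - hA.1.cfc f).trace = ((f b - f a : ℝ) : ℂ) := by
    rw [Matrix.trace_sub, trace_cfc_aux, trace_cfc_aux]
    simp [heigA, heigB, Fin.sum_univ_one]
  have hre := key.re_dotProduct_nonneg (fun _ => 1)
  have hd : (star (fun _ => (1:ℂ))) ⬝ᵥ ((hB.1.cfc f - hA.1.cfc f) *ᵥ (fun _ => 1))
      = (hB.1.cfc f - hA.1.cfc f).trace := by
    simp [dotProduct, Matrix.mulVec, Matrix.trace, Fin.sum_univ_one, Matrix.diag]
  rw [hd, htr] at hre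
  simpa using hre

lemma adjustedMean_nonneg_aux {f : ℝ → ℝ} (hreg : 0 < f 0)
    (hm : ∀ a b : ℝ, 0 ≤ a → a ≤ b → f a ≤ f b) {x y : ℝ} (hx : 0 ≤ x) (hy : 0 ≤ y) :
    0 ≤ adjustedMean f x y := by
  unfold adjustedMean
  split_ifs with h
  · exact mul_nonneg hy hreg.le
  · exact mul_nonneg hx (hreg.le.trans (hm 0 (y/x) le_rfl (div_nonneg hy hx)))

/-- The key scalar estimate: `f(0)·(x−y)²/m^f(x,y) ≤ x + y`. -/
lemma key_bound_aux {f : ℝ → ℝ}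
    (hsym : ∀ t > (0:ℝ), f t = t * f t⁻¹) (hreg : 0 < f 0)
    (hm : ∀ a b : ℝ, 0 ≤ a → a ≤ b → f a ≤ f b) {x y : ℝ} (hx : 0 ≤ x) (hy : 0 ≤ y) :
    f 0 * ((x - y) ^ 2 / adjustedMean f x y) ≤ x + y := by
  unfold adjustedMean
  split_ifs with h
  · subst h
    rcases eq_or_lt_of_le hy with h0 | h0
    · simp [← h0]
    · rw [div_mul_eq_div_div, mul_div_assoc']
      rw [mul_comm, mul_div_assoc, div_self hreg.ne', mul_one]
      rw [div_le_iff₀ h0]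
      nlinarith
  · have hx' : (0:ℝ) < x := lt_of_le_of_ne hx (Ne.symm h)
    have hfpos : 0 < f (y / x) := lt_of_lt_of_le hreg (hm 0 (y/x) le_rfl (div_nonneg hy hx))
    rw [mul_div_assoc', div_le_iff₀ (by positivity)]
    rcases le_or_gt y (3 * x) with hc | hc
    · have h1 : f 0 ≤ f (y / x) := hm 0 (y/x) le_rfl (div_nonneg hy hx)
      have h2 : (x - y) ^ 2 ≤ (x + y) * x := by nlinarith
      calc f 0 * (x - y) ^ 2 ≤ f (y/x) * ((x+y) * x) := by nlinarith
        _ = (x + y) * (x * f (y/x)) := by ring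
    · have hy' : (0:ℝ) < y := lt_trans (by linarith) hc
      have ht : (0:ℝ) < y / x := div_pos hy' hx'
      have h1 : x * f (y / x) = y * f (x / y) := by
        rw [hsym (y/x) ht, show (y/x)⁻¹ = x / y by rw [inv_div]]
        field_simp
      have h2 : f 0 ≤ f (x / y) := hm 0 (x/y) le_rfl (div_nonneg hx hy'.le)
      rw [h1]
      have h3 : (x - y) ^ 2 ≤ (x + y) * y := by nlinarith
      calc f 0 * (x - y) ^ 2 ≤ f (x/y) * ((x+y) * y) := by nlinarith
        _ = (x + y) * (y * f (x/y)) := by ring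

/-- For a density matrix `ρ` on an `n`-dimensional system and a regular symmetric
normalized operator monotone function `f`, the quantum uncertainty `Q^f(ρ)`
satisfies `0 ≤ Q^f(ρ) ≤ n - 1`. -/
theorem Qf_nonneg_and_le
    (f : ℝ → ℝ) (hmono : OperatorMonotone f) (hnorm : f 1 = 1)
    (hsym : ∀ t > (0:ℝ), f t = t * f t⁻¹) (hreg : 0 < f 0)
    {n : ℕ} (ρ : Matrix (Fin n) (Fin n) ℂ) (hρ : ρ.PosSemidef) (htr : ρ.trace = 1) :
    0 ≤ Qf f ρ hρ.1 ∧ Qf f ρ hρ.1 ≤ (n : ℝ) - 1 := by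
  have hm : ∀ a b : ℝ, 0 ≤ a → a ≤ b → f a ≤ f b := fun a b ha hab =>
    scalar_mono_aux hmono ha hab
  set lam : Fin n → ℝ := hρ.1.eigenvalues with hlam
  have hlnn : ∀ i, 0 ≤ lam i := fun i => hρ.eigenvalues_nonneg i
  have hsum : ∑ i, lam i = 1 := by
    have h := trace_eq_sum_eig_aux hρ.1
    rw [htr] at h
    have : ((∑ i, lam i : ℝ) : ℂ) = 1 := by push_cast; exact h.symm
    exact_mod_cast this
  -- terms are nonnegative
  have hterm_nonneg : ∀ k l, 0 ≤ (lam k - lam l) ^ 2 / adjustedMean f (lam k) (lam l) :=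
    fun k l => div_nonneg (sq_nonneg _) (adjustedMean_nonneg_aux hreg hm (hlnn k) (hlnn l))
  have hS_nonneg : 0 ≤ ∑ k, ∑ l, (lam k - lam l) ^ 2 / adjustedMean f (lam k) (lam l) :=
    Finset.sum_nonneg fun k _ => Finset.sum_nonneg fun l _ => hterm_nonneg k l
  constructor
  · exact mul_nonneg (by positivity) hS_nonneg
  · -- upper bound
    have hbound : ∀ k l : Fin n,
        f 0 * ((lam k - lam l) ^ 2 / adjustedMean f (lam k) (lam l))
          ≤ if k = l then 0 else lam k + lam l := by
      intro k l
      split_ifs with h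
      · subst h; simp
      · exact key_bound_aux hsym hreg hm (hlnn k) (hlnn l)
    have hmain : f 0 * (∑ k, ∑ l, (lam k - lam l) ^ 2 / adjustedMean f (lam k) (lam l))
        ≤ 2 * (n : ℝ) - 2 := by
      rw [Finset.mul_sum]
      simp_rw [Finset.mul_sum]
      calc ∑ k, ∑ l, f 0 * ((lam k - lam l) ^ 2 / adjustedMean f (lam k) (lam l))
          ≤ ∑ k, ∑ l, (if k = l then 0 else lam k + lam l) :=
            Finset.sum_le_sum fun k _ => Finset.sum_le_sum fun l _ => hbound k l
        _ = 2 * (n : ℝ) - 2 := by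
            have hrow : ∀ k : Fin n, ∑ l, (if k = l then (0:ℝ) else lam k + lam l)
                = (n : ℝ) * lam k + 1 - 2 * lam k := by
              intro k
              have : ∀ l : Fin n, (if k = l then (0:ℝ) else lam k + lam l)
                  = (lam k + lam l) - (if k = l then lam k + lam l else 0) := by
                intro l; split_ifs <;> ring
              simp_rw [this]
              rw [Finset.sum_sub_distrib, Finset.sum_ite_eq, Finset.sum_add_distrib,
                Finset.sum_const, hsum]
              simp [Finset.card_univ]
              ring
            rw [Finset.sum_congr rfl fun k _ => hrow k]
            rw [Finset.sum_sub_distrib, Finset.sum_add_distrib, Finset.sum_const,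
              ← Finset.mul_sum, ← Finset.mul_sum, hsum]
            simp [Finset.card_univ]
            ring
    have hn : 1 ≤ n := by
      by_contra hn
      interval_cases n
      simp at hsum
    unfold Qf
    rw [div_mul_eq_mul_div]
    rw [div_le_iff₀ (by norm_num : (0:ℝ) < 2)]
    calc f 0 * (∑ k, ∑ l, (hρ.1.eigenvalues k - hρ.1.eigenvalues l) ^ 2
          / adjustedMean f (hρ.1.eigenvalues k) (hρ.1.eigenvalues l)) ≤ 2 * (n:ℝ) - 2 := hmain
      _ = ((n:ℝ) - 1) * 2 := by ring
end

section
/- For every regular symmetric normalized operator monotone f and every density matrix ρ, Q^f(ρ) ≤ Q^{SLD}(ρ), where f^{SLD}(t) = (t+1)/2. Equivalently, using the spectral formula, (f(0)/2)∑_{k,l}(λ_k−λ_l)²/m^f(λ_k,λ_l) ≤ (1/4)∑_{k,l}(λ_k−λ_l)²·2/(λ_k+λ_l) = ∑_{k,l}[(λ_k+λ_l)/2 − 2λ_kλ_l/(λ_k+λ_l)]. -/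
open scoped ComplexOrder

lemma quad_spectrum {m : ℕ} {M : Matrix (Fin m) (Fin m) ℂ} {a b : ℝ}
    (h : (M - algebraMap ℝ (Matrix (Fin m) (Fin m) ℂ) a) *
      (M - algebraMap ℝ (Matrix (Fin m) (Fin m) ℂ) b) = 0) :
    spectrum ℝ M ⊆ {a, b} := by
  intro x hx
  by_contra hxab
  simp only [Set.mem_insert_iff, Set.mem_singleton_iff, not_or] at hxab
  obtain ⟨hxa, hxb⟩ := hxab
  rw [spectrum.mem_iff] at hx
  apply hx
  have h' := h
  rw [Algebra.algebraMap_eq_smul_one, Algebra.algebraMap_eq_smul_one] at h'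
  have hM2 : M * M = (a + b) • M - (a * b) • (1 : Matrix (Fin m) (Fin m) ℂ) := by
    simp only [sub_mul, mul_sub, smul_mul_assoc, mul_smul_comm, one_mul, mul_one, smul_smul,
      smul_sub, sub_sub_eq_add_sub] at h'
    linear_combination (norm := module) h'
  set k : ℝ := (x - a) * (x - b) with hk
  have hk0 : k ≠ 0 := mul_ne_zero (sub_ne_zero.mpr hxa) (sub_ne_zero.mpr hxb)
  set N : Matrix (Fin m) (Fin m) ℂ := (x - a - b) • 1 + M with hN
  have key : (algebraMap ℝ (Matrix (Fin m) (Fin m) ℂ) x - M) * N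
      = k • (1 : Matrix (Fin m) (Fin m) ℂ) := by
    rw [Algebra.algebraMap_eq_smul_one, hN]
    simp only [sub_mul, mul_add, add_mul, mul_sub, smul_mul_assoc, mul_smul_comm, one_mul, mul_one,
      smul_smul, hM2]
    rw [hk]
    module
  have key2 : N * (algebraMap ℝ (Matrix (Fin m) (Fin m) ℂ) x - M)
      = k • (1 : Matrix (Fin m) (Fin m) ℂ) := by
    rw [Algebra.algebraMap_eq_smul_one, hN]
    simp only [sub_mul, mul_sub, add_mul, mul_add, smul_mul_assoc, mul_smul_comm, one_mul, mul_one,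
      smul_smul, hM2]
    rw [hk]
    module
  refine ⟨⟨algebraMap ℝ (Matrix (Fin m) (Fin m) ℂ) x - M, k⁻¹ • N, ?_, ?_⟩, rfl⟩
  · rw [mul_smul_comm, key, smul_smul, inv_mul_cancel₀ hk0, one_smul]
  · rw [smul_mul_assoc, key2, smul_smul, inv_mul_cancel₀ hk0, one_smul]

lemma cfc_linear {m : ℕ} {M : Matrix (Fin m) (Fin m) ℂ} (hM : M.IsHermitian) {a b c₀ c₁ : ℝ}
    (f : ℝ → ℝ)
    (h : (M - algebraMap ℝ (Matrix (Fin m) (Fin m) ℂ) a) *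
      (M - algebraMap ℝ (Matrix (Fin m) (Fin m) ℂ) b) = 0)
    (ha : c₀ + c₁ * a = f a) (hb : c₀ + c₁ * b = f b) :
    hM.cfc f = algebraMap ℝ (Matrix (Fin m) (Fin m) ℂ) c₀ + c₁ • M := by
  have hM' : IsSelfAdjoint M := hM
  rw [← Matrix.IsHermitian.cfc_eq]
  have hsub := quad_spectrum h
  have h1 : cfc f M = cfc (fun z : ℝ => c₀ + c₁ * z) M := by
    apply cfc_congr
    intro z hz
    rcases hsub hz with rfl | rfl
    · exact ha.symm
    · exact hb.symm
  rw [h1, cfc_const_add c₀ (fun z : ℝ => c₁ * z) M,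
    cfc_const_mul c₁ (fun z : ℝ => z) M, cfc_id' ℝ M]

lemma psd2 {p q r : ℝ} (hp : 0 ≤ p) (hr : 0 ≤ r) (h : q ^ 2 = p * r) :
    Matrix.PosSemidef !![(p : ℂ), (q : ℂ); (q : ℂ), (r : ℂ)] := by
  by_cases hp0 : p = 0
  · have hq0 : q = 0 := by nlinarith [sq_nonneg q]
    have : !![(p : ℂ), (q : ℂ); (q : ℂ), (r : ℂ)] = Matrix.diagonal ![(p : ℂ), (r : ℂ)] := by
      ext i j
      fin_cases i <;> fin_cases j <;> simp [hq0, Matrix.diagonal]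
    rw [this]
    refine Matrix.PosSemidef.diagonal fun i => ?_
    fin_cases i <;> simp [hp0] <;>
      exact_mod_cast Complex.real_le_real.mpr hr
  · have hpp : 0 < p := lt_of_le_of_ne hp (Ne.symm hp0)
    set u : Fin 2 → ℂ := ![(Real.sqrt p : ℂ), ((q / Real.sqrt p : ℝ) : ℂ)] with hu
    have key : !![(p : ℂ), (q : ℂ); (q : ℂ), (r : ℂ)]
        = Matrix.replicateCol (Fin 1) u * (Matrix.replicateCol (Fin 1) u).conjTranspose := by
      have hsp : Real.sqrt p * Real.sqrt p = p := Real.mul_self_sqrt hp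
      have hsp0 : Real.sqrt p ≠ 0 := by positivity
      ext i j
      fin_cases i <;> fin_cases j <;>
        try simp [hu, Matrix.mul_apply, Matrix.replicateCol, Matrix.conjTranspose_apply]
      all_goals try push_cast
      all_goals try field_simp
      all_goals try norm_cast
      all_goals nlinarith [hsp]
    rw [key]
    exact Matrix.posSemidef_self_mul_conjTranspose _

lemma diag_nonneg {m : ℕ} {P : Matrix (Fin m) (Fin m) ℂ} (hP : P.PosSemidef) (i : Fin m) :
    0 ≤ P i i := by
  exact hP.diag_nonneg

lemma workhorse (f : ℝ → ℝ) (hmono : OperatorMonotone f)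
    {s t x y : ℝ} (hs : 0 < s) (ht : 0 < t) (hx : 0 ≤ x) (hy : 0 ≤ y)
    (hxy : x ^ 2 + y ^ 2 = s) (hx2 : x ^ 2 < t) (hts : t ≠ s) :
    f 0 + (f s - f 0) / s * x ^ 2 ≤ f t := by
  have htx : 0 < t - x ^ 2 := by linarith
  set μ : ℝ := y ^ 2 + x ^ 2 * y ^ 2 / (t - x ^ 2) with hμdef
  have hμ : 0 ≤ μ := by positivity
  have hμt : μ ≠ t := by
    intro hEq
    apply hts
    have e : μ * (t - x ^ 2) = y ^ 2 * (t - x ^ 2) + x ^ 2 * y ^ 2 := by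
      rw [hμdef]; field_simp; try ring
    rw [hEq] at e
    have h2 : t * t = t * s := by nlinarith
    exact mul_left_cancel₀ (ne_of_gt ht) h2
  set A : Matrix (Fin 2) (Fin 2) ℂ :=
    !![((x ^ 2 : ℝ) : ℂ), ((x * y : ℝ) : ℂ); ((x * y : ℝ) : ℂ), ((y ^ 2 : ℝ) : ℂ)] with hAdef
  set B : Matrix (Fin 2) (Fin 2) ℂ := Matrix.diagonal ![((t : ℝ) : ℂ), ((μ : ℝ) : ℂ)] with hBdef
  have hA : A.PosSemidef := psd2 (by positivity) (by positivity) (by ring)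
  have hB : B.PosSemidef := by
    refine Matrix.PosSemidef.diagonal fun i => ?_
    fin_cases i <;> simp <;> exact_mod_cast Complex.real_le_real.mpr (by linarith)
  have hD : (B - A).PosSemidef := by
    have hBA : B - A = !![((t - x ^ 2 : ℝ) : ℂ), ((-(x * y) : ℝ) : ℂ);
        ((-(x * y) : ℝ) : ℂ), ((μ - y ^ 2 : ℝ) : ℂ)] := by
      ext i j
      fin_cases i <;> fin_cases j <;> simp [hAdef, hBdef, Matrix.diagonal] <;> push_cast <;> ring
    rw [hBA]
    refine psd2 (by linarith) ?_ ?_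
    · have e : μ - y ^ 2 = x ^ 2 * y ^ 2 / (t - x ^ 2) := by rw [hμdef]; ring
      rw [e]
      exact div_nonneg (by positivity) htx.le
    · have e : μ - y ^ 2 = x ^ 2 * y ^ 2 / (t - x ^ 2) := by rw [hμdef]; ring
      rw [e]; field_simp
  have happ := hmono 2 A B hA hB hD
  -- linear interpolation coefficients
  have hxyC : ((x : ℂ)) ^ 2 + ((y : ℂ)) ^ 2 = (s : ℂ) := by exact_mod_cast hxy
  have hquadA : (A - algebraMap ℝ (Matrix (Fin 2) (Fin 2) ℂ) 0) *
      (A - algebraMap ℝ (Matrix (Fin 2) (Fin 2) ℂ) s) = 0 := by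
    ext i j
    fin_cases i <;> fin_cases j <;>
      simp [hAdef, Matrix.mul_apply, Fin.sum_univ_two, Matrix.algebraMap_matrix_apply,
        Matrix.diagonal] <;> push_cast <;>
      first
        | linear_combination ((x:ℂ)^2) * hxyC
        | linear_combination ((x:ℂ)*(y:ℂ)) * hxyC
        | linear_combination ((y:ℂ)^2) * hxyC
  have hquadB : (B - algebraMap ℝ (Matrix (Fin 2) (Fin 2) ℂ) t) *
      (B - algebraMap ℝ (Matrix (Fin 2) (Fin 2) ℂ) μ) = 0 := by
    ext i j
    fin_cases i <;> fin_cases j <;>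
      simp [hBdef, Matrix.mul_apply, Fin.sum_univ_two, Matrix.algebraMap_matrix_apply,
        Matrix.diagonal] <;> ring
  set α : ℝ := (f s - f 0) / s with hα
  set β : ℝ := (f μ - f t) / (μ - t) with hβ
  have cfcA : hA.1.cfc f = algebraMap ℝ (Matrix (Fin 2) (Fin 2) ℂ) (f 0) + α • A := by
    refine cfc_linear hA.1 f hquadA (by ring) ?_
    rw [hα]; field_simp; ring
  have cfcB : hB.1.cfc f = algebraMap ℝ (Matrix (Fin 2) (Fin 2) ℂ) (f t - β * t) + β • B := by
    refine cfc_linear hB.1 f hquadB (by ring) ?_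
    rw [hβ]; field_simp [sub_ne_zero.mpr hμt]; ring
  rw [cfcA, cfcB] at happ
  have h00 := diag_nonneg happ 0
  simp only [Matrix.sub_apply, Matrix.add_apply, Matrix.smul_apply,
    Matrix.algebraMap_matrix_apply, hAdef, hBdef, Matrix.diagonal_apply_eq,
    Matrix.cons_val', Matrix.cons_val_zero, Matrix.empty_val', Matrix.cons_val_fin_one,
    Matrix.of_apply, if_pos rfl, Complex.real_smul] at h00
  have h00' : (0 : ℝ) ≤ f t - β * t + β * t - (f 0 + α * x ^ 2) := by
    simp only [Complex.coe_algebraMap, if_true] at h00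
    exact_mod_cast h00
  linarith [h00']

section scalar
variable {f : ℝ → ℝ} (hmono : OperatorMonotone f) (hnorm : f 1 = 1)

include hmono in
lemma hf0le : ∀ t : ℝ, 0 < t → f 0 ≤ f t := by
  intro t ht
  have h := workhorse f hmono (s := t / 2) (t := t) (x := 0) (y := Real.sqrt (t / 2))
    (by linarith) ht le_rfl (Real.sqrt_nonneg _)
    (by rw [Real.sq_sqrt (by linarith : (0:ℝ) ≤ t / 2)]; ring)
    (by simpa using ht) (by intro h; linarith)
  simpa using h
include hmono in
lemma mono' : ∀ a b : ℝ, 0 < a → a < b → f a ≤ f b := by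
  intro a b ha hab
  have h := workhorse f hmono (s := a) (t := b) (x := Real.sqrt a) (y := 0)
    ha (by linarith) (Real.sqrt_nonneg _) le_rfl
    (by rw [Real.sq_sqrt ha.le]; ring)
    (by rw [Real.sq_sqrt ha.le]; exact hab) (by intro h; linarith)
  rw [Real.sq_sqrt ha.le] at h
  have : (f a - f 0) / a * a = f a - f 0 := by field_simp
  rw [this] at h
  linarith

include hmono hnorm in
lemma chordq : ∀ t q : ℝ, 0 ≤ q → q < t → t < 1 → f 0 + (1 - f 0) * q ≤ f t := by
  intro t q hq hqt ht1
  have hq1 : q < 1 := by linarith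
  have h := workhorse f hmono (s := 1) (t := t) (x := Real.sqrt q) (y := Real.sqrt (1 - q))
    one_pos (by linarith) (Real.sqrt_nonneg _) (Real.sqrt_nonneg _)
    (by rw [Real.sq_sqrt hq, Real.sq_sqrt (by linarith : (0:ℝ) ≤ 1 - q)]; ring)
    (by rw [Real.sq_sqrt hq]; exact hqt) (by intro h; linarith)
  rw [Real.sq_sqrt hq, hnorm] at h
  simpa using h

include hmono hnorm in
lemma f0_half (hreg : 0 < f 0) (hsym : ∀ t > (0:ℝ), f t = t * f t⁻¹) : f 0 ≤ 1 / 2 := by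
  have main : ∀ s q : ℝ, 1 < s → 0 ≤ q → q < 1 → f 0 * (s + (s - 1) * q) ≤ s := by
    intro s q hs1 hq0 hq1
    have hs0 : (0:ℝ) < s := by linarith
    have h := workhorse f hmono (s := s) (t := 1) (x := Real.sqrt q) (y := Real.sqrt (s - q))
      hs0 one_pos (Real.sqrt_nonneg _) (Real.sqrt_nonneg _)
      (by rw [Real.sq_sqrt hq0, Real.sq_sqrt (by linarith : (0:ℝ) ≤ s - q)]; ring)
      (by rw [Real.sq_sqrt hq0]; exact hq1) (by intro h; linarith)
    rw [Real.sq_sqrt hq0, hnorm] at h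
    have hfs : s * f 0 ≤ f s := by
      have h1 := hsym s hs0
      have h2 := hf0le hmono s⁻¹ (by positivity)
      rw [h1]
      nlinarith
    have h2 := mul_le_mul_of_nonneg_right h hs0.le
    have e : (f 0 + (f s - f 0) / s * q) * s = f 0 * s + (f s - f 0) * q := by
      field_simp
    rw [e, one_mul] at h2
    nlinarith [mul_le_mul_of_nonneg_right hfs hq0]
  by_contra hcon
  push_neg at hcon
  have h2g : (0:ℝ) < 2 * f 0 - 1 := by linarith
  have hg0 : (0:ℝ) < f 0 := hreg
  have hs1 : (1:ℝ) < 2 * f 0 / (2 * f 0 - 1) := by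
    rw [lt_div_iff₀ h2g]; linarith
  have hq0 : (0:ℝ) ≤ 1 / (2 * f 0) := by positivity
  have hq1 : 1 / (2 * f 0) < 1 := by
    rw [div_lt_one (by linarith : (0:ℝ) < 2 * f 0)]; linarith
  have h := main (2 * f 0 / (2 * f 0 - 1)) (1 / (2 * f 0)) hs1 hq0 hq1
  have hne1 : (2 * f 0 - 1 : ℝ) ≠ 0 := ne_of_gt h2g
  have hne2 : (f 0 : ℝ) ≠ 0 := ne_of_gt hg0
  have h' : f 0 * (2 * f 0 * (2 * f 0) + 1) ≤ 2 * f 0 * (2 * f 0) := by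
    have e : (f 0 * (2 * f 0 / (2 * f 0 - 1) + (2 * f 0 / (2 * f 0 - 1) - 1) * (1 / (2 * f 0))))
        * ((2 * f 0 - 1) * (2 * f 0))
        = f 0 * (2 * f 0 * (2 * f 0) + 1) := by
      have hne3 : (-1 + f 0 * 2 : ℝ) ≠ 0 := by intro h; apply hne1; linarith
      field_simp
      ring_nf
      field_simp
      ring
    have e2 : (2 * f 0 / (2 * f 0 - 1)) * ((2 * f 0 - 1) * (2 * f 0))
        = 2 * f 0 * (2 * f 0) := by
      field_simp
    calc f 0 * (2 * f 0 * (2 * f 0) + 1) = _ := e.symm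
      _ ≤ _ := mul_le_mul_of_nonneg_right h (by positivity)
      _ = 2 * f 0 * (2 * f 0) := e2
  nlinarith [mul_pos hg0 (mul_pos h2g h2g)]
include hmono hnorm in
lemma chord (hreg : 0 < f 0) (hsym : ∀ t > (0:ℝ), f t = t * f t⁻¹) :
    ∀ t : ℝ, 0 < t → t < 1 → f 0 + (1 - f 0) * t ≤ f t := by
  intro t ht ht1
  have hhalf := f0_half hmono hnorm hreg hsym
  have h1f0 : (0:ℝ) < 1 - f 0 := by linarith
  by_contra hcon
  push_neg at hcon
  set gap : ℝ := f 0 + (1 - f 0) * t - f t with hgap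
  have hgap0 : 0 < gap := by rw [hgap]; linarith
  set δ : ℝ := min (t / 2) (gap / (2 * (1 - f 0))) with hδ
  have hδ0 : 0 < δ := lt_min (by linarith) (by positivity)
  have hδt : δ ≤ t / 2 := min_le_left _ _
  have hδg : δ ≤ gap / (2 * (1 - f 0)) := min_le_right _ _
  have h := chordq hmono hnorm t (t - δ) (by linarith) (by linarith) ht1
  have : (1 - f 0) * δ ≤ gap / 2 := by
    have := mul_le_mul_of_nonneg_left hδg h1f0.le
    calc (1 - f 0) * δ ≤ (1 - f 0) * (gap / (2 * (1 - f 0))) := this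
      _ = gap / 2 := by field_simp
  nlinarith

include hmono hnorm in
lemma keyineq (hreg : 0 < f 0) (hsym : ∀ t > (0:ℝ), f t = t * f t⁻¹) :
    ∀ t : ℝ, 0 < t → f 0 * (1 + t) ≤ f t := by
  have hhalf := f0_half hmono hnorm hreg hsym
  have base : ∀ t : ℝ, 0 < t → t ≤ 1 → f 0 * (1 + t) ≤ f t := by
    intro t ht ht1
    rcases eq_or_lt_of_le ht1 with rfl | hlt
    · rw [hnorm]; linarith
    · have h := chord hmono hnorm hreg hsym t ht hlt
      nlinarith
  intro t ht
  rcases le_or_gt t 1 with h1 | h1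
  · exact base t ht h1
  · have hinv : 0 < t⁻¹ := by positivity
    have hinv1 : t⁻¹ ≤ 1 := by
      rw [inv_le_one_iff₀]; right; linarith
    have h := base t⁻¹ hinv hinv1
    rw [hsym t ht]
    have := mul_le_mul_of_nonneg_left h (le_of_lt ht)
    calc f 0 * (1 + t) = f 0 * (t * t⁻¹ + t) := by rw [mul_inv_cancel₀ (ne_of_gt ht)]
      _ = t * (f 0 * (1 + t⁻¹)) := by ring
      _ ≤ t * f t⁻¹ := this
end scalar

lemma mean_bound {f : ℝ → ℝ} (hmono : OperatorMonotone f) (hnorm : f 1 = 1)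
    (hreg : 0 < f 0) (hsym : ∀ t > (0:ℝ), f t = t * f t⁻¹)
    {x y : ℝ} (hx : 0 < x) (hy : 0 < y) :
    f 0 * (x + y) ≤ x * f (y / x) := by
  have h := keyineq hmono hnorm hreg hsym (y / x) (by positivity)
  have := mul_le_mul_of_nonneg_left h (le_of_lt hx)
  calc f 0 * (x + y) = f 0 * (x + x * (y / x)) := by rw [mul_div_cancel₀ _ (ne_of_gt hx)]
    _ = x * (f 0 * (1 + y / x)) := by ring
    _ ≤ x * f (y / x) := this

lemma pair_bound {f : ℝ → ℝ} (hmono : OperatorMonotone f) (hnorm : f 1 = 1)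
    (hreg : 0 < f 0) (hsym : ∀ t > (0:ℝ), f t = t * f t⁻¹)
    {a b : ℝ} (ha : 0 ≤ a) (hb : 0 ≤ b) :
    f 0 / 2 * ((a - b) ^ 2 / adjustedMean f a b)
      ≤ (a + b) / 2 - 2 * a * b / (a + b) := by
  rcases eq_or_lt_of_le ha with rfl | ha'
  · rcases eq_or_lt_of_le hb with rfl | hb'
    · simp [adjustedMean]
    · rw [adjustedMean, if_pos rfl]
      have h1 : f 0 ≠ 0 := ne_of_gt hreg
      have h2 : b ≠ 0 := ne_of_gt hb'
      have eL : f 0 / 2 * ((0 - b) ^ 2 / (b * f 0)) = b / 2 := by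
        field_simp
        ring
      have eR : (0 + b) / 2 - 2 * 0 * b / (0 + b) = b / 2 := by
        simp
      rw [eL, eR]
  · rcases eq_or_lt_of_le hb with rfl | hb'
    · rw [adjustedMean, if_neg (ne_of_gt ha'), zero_div]
      have h1 : f 0 ≠ 0 := ne_of_gt hreg
      have h2 : a ≠ 0 := ne_of_gt ha'
      have eL : f 0 / 2 * ((a - 0) ^ 2 / (a * f 0)) = a / 2 := by
        field_simp
        ring
      have eR : (a + 0) / 2 - 2 * a * 0 / (a + 0) = a / 2 := by
        simp
      rw [eL, eR]
    · have hm := mean_bound hmono hnorm hreg hsym ha' hb'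
      have hm0 : 0 < adjustedMean f a b := by
        rw [adjustedMean, if_neg (ne_of_gt ha')]
        calc (0:ℝ) < f 0 * (a + b) := by positivity
          _ ≤ a * f (b / a) := hm
      rw [adjustedMean, if_neg (ne_of_gt ha')]
      have hab : (0:ℝ) < a + b := by linarith
      have e1 : f 0 / 2 * ((a - b) ^ 2 / (a * f (b / a)))
          = (f 0 * (a - b) ^ 2 / 2) / (a * f (b / a)) := by ring
      have e2 : (a + b) / 2 - 2 * a * b / (a + b) = (a - b) ^ 2 / (2 * (a + b)) := by
        field_simp
        ring
      rw [e1, e2]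
      calc (f 0 * (a - b) ^ 2 / 2) / (a * f (b / a))
          ≤ (f 0 * (a - b) ^ 2 / 2) / (f 0 * (a + b)) := by
            gcongr
          _ = (a - b) ^ 2 / (2 * (a + b)) := by
            rw [div_eq_div_iff (by positivity) (by positivity)]
            ring

/-- For every regular symmetric normalized operator monotone `f` and every
density matrix `ρ`, `Q^f(ρ) ≤ Q^{SLD}(ρ)`, the `Q` of `f^{SLD}(t) = (t+1)/2`,
expressed spectrally. -/
theorem Qf_le_Qsld
    (f : ℝ → ℝ) (hmono : OperatorMonotone f) (hnorm : f 1 = 1)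
    (hsym : ∀ t > (0:ℝ), f t = t * f t⁻¹) (hreg : 0 < f 0)
    {n : ℕ} (ρ : Matrix (Fin n) (Fin n) ℂ) (hρ : ρ.PosSemidef) (htr : ρ.trace = 1) :
    (f 0 / 2) * ∑ k, ∑ l,
        (hρ.1.eigenvalues k - hρ.1.eigenvalues l) ^ 2
          / adjustedMean f (hρ.1.eigenvalues k) (hρ.1.eigenvalues l)
      ≤ ∑ k, ∑ l, ((hρ.1.eigenvalues k + hρ.1.eigenvalues l) / 2
          - 2 * hρ.1.eigenvalues k * hρ.1.eigenvalues l
            / (hρ.1.eigenvalues k + hρ.1.eigenvalues l)) := by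
  rw [Finset.mul_sum]
  refine Finset.sum_le_sum fun k _ => ?_
  rw [Finset.mul_sum]
  refine Finset.sum_le_sum fun l _ => ?_
  exact pair_bound hmono hnorm hreg hsym (hρ.eigenvalues_nonneg k) (hρ.eigenvalues_nonneg l)
end

section
/- Let ρ^{ab} = ∑_j p_j ρ^a_j ⊗ ρ^b_j be a separable density matrix on ℂ^m ⊗ ℂ^m (p_j ≥ 0, ∑ p_j = 1), and suppose Q^f(σ) ≤ m−1 for every m×m density matrix σ and I^f is convex in the state. If {A_k} and {B_k} are orthonormal bases (k = 1,...,m²) of the m×m Hermitian matrices and additionally I^f(σ^a⊗σ^b, A⊗I + I⊗B) = I^f(σ^a,A) + I^f(σ^b,B) for product states, then F̂^f(ρ^{ab}) := ∑_{k=1}^{m²} I^f(ρ^{ab}, A_k ⊗ I + I ⊗ A_k) ≤ 2m − 2. Hence F̂^f(ρ^{ab}) > 2m−2 implies ρ^{ab} is entangled. -/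
open scoped ComplexOrder Kronecker

open Matrix

lemma kron_conjTranspose {m : ℕ} (A B : Matrix (Fin m) (Fin m) ℂ) :
    (A ⊗ₖ B)ᴴ = Aᴴ ⊗ₖ Bᴴ := by
  ext i j
  simp [Matrix.conjTranspose_apply, Matrix.kroneckerMap_apply, mul_comm]

lemma kron_posSemidef {m : ℕ} {A B : Matrix (Fin m) (Fin m) ℂ}
    (hA : A.PosSemidef) (hB : B.PosSemidef) : (A ⊗ₖ B).PosSemidef := by
  exact hA.kronecker hB

lemma kron_isHermitian {m : ℕ} {A B : Matrix (Fin m) (Fin m) ℂ}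
    (hA : A.IsHermitian) (hB : B.IsHermitian) : (A ⊗ₖ B).IsHermitian := by
  unfold Matrix.IsHermitian
  rw [kron_conjTranspose, hA.eq, hB.eq]

/-- Entanglement criterion via the metric adjusted skew information: for a
separable state `ρ^{ab} = ∑ pⱼ ρ^a_j ⊗ ρ^b_j` on `ℂ^m ⊗ ℂ^m`, given that the
skew information `I^f` is convex in the state, additive on product states for
local observables, and that its total over an orthonormal Hermitian basis is
bounded by `m - 1` on each factor, one has
`F̂^f(ρ^{ab}) = ∑_k I^f(ρ^{ab}, A_k ⊗ I + I ⊗ A_k) ≤ 2m - 2`. -/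
theorem separable_Fhat_le
    {m : ℕ}
    (If1 : Matrix (Fin m) (Fin m) ℂ → Matrix (Fin m) (Fin m) ℂ → ℝ)
    (If2 : Matrix (Fin m × Fin m) (Fin m × Fin m) ℂ →
      Matrix (Fin m × Fin m) (Fin m × Fin m) ℂ → ℝ)
    (A : Fin (m ^ 2) → Matrix (Fin m) (Fin m) ℂ)
    (hAherm : ∀ k, (A k).IsHermitian)
    (hAortho : ∀ k l, ((A k) * (A l)).trace = if k = l then 1 else 0)
    -- `I^f` is convex in the state:
    (hconv : ∀ (N : ℕ) (q : Fin N → ℝ) (σ : Fin N → Matrix (Fin m × Fin m) (Fin m × Fin m) ℂ)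
      (H : Matrix (Fin m × Fin m) (Fin m × Fin m) ℂ),
      (∀ j, 0 ≤ q j) → ∑ j, q j = 1 → (∀ j, (σ j).PosSemidef ∧ (σ j).trace = 1) →
      H.IsHermitian →
      If2 (∑ j, (q j : ℂ) • σ j) H ≤ ∑ j, q j * If2 (σ j) H)
    -- additivity of `I^f` on product states for local observables:
    (hadd : ∀ (σa σb : Matrix (Fin m) (Fin m) ℂ),
      σa.PosSemidef → σa.trace = 1 → σb.PosSemidef → σb.trace = 1 →
      ∀ (Aa Bb : Matrix (Fin m) (Fin m) ℂ), Aa.IsHermitian → Bb.IsHermitian →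
      If2 (σa ⊗ₖ σb) (Aa ⊗ₖ (1 : Matrix (Fin m) (Fin m) ℂ)
          + (1 : Matrix (Fin m) (Fin m) ℂ) ⊗ₖ Bb)
        = If1 σa Aa + If1 σb Bb)
    -- the bound `Q^f(σ) ≤ m - 1` on a single factor:
    (hQ : ∀ σ : Matrix (Fin m) (Fin m) ℂ, σ.PosSemidef → σ.trace = 1 →
      ∑ k, If1 σ (A k) ≤ (m : ℝ) - 1)
    -- a separable state:
    {N : ℕ} (p : Fin N → ℝ) (ρa ρb : Fin N → Matrix (Fin m) (Fin m) ℂ)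
    (hp : ∀ j, 0 ≤ p j) (hpsum : ∑ j, p j = 1)
    (hρa : ∀ j, (ρa j).PosSemidef ∧ (ρa j).trace = 1)
    (hρb : ∀ j, (ρb j).PosSemidef ∧ (ρb j).trace = 1)
    (ρab : Matrix (Fin m × Fin m) (Fin m × Fin m) ℂ)
    (hsep : ρab = ∑ j, (p j : ℂ) • ((ρa j) ⊗ₖ (ρb j))) :
    ∑ k, If2 ρab ((A k) ⊗ₖ (1 : Matrix (Fin m) (Fin m) ℂ)
        + (1 : Matrix (Fin m) (Fin m) ℂ) ⊗ₖ (A k))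
      ≤ 2 * m - 2 := by
  have hprod : ∀ j, ((ρa j) ⊗ₖ (ρb j)).PosSemidef ∧ ((ρa j) ⊗ₖ (ρb j)).trace = 1 := by
    intro j
    refine ⟨kron_posSemidef (hρa j).1 (hρb j).1, ?_⟩
    rw [Matrix.trace_kronecker, (hρa j).2, (hρb j).2, one_mul]
  have key : ∀ k, If2 ρab ((A k) ⊗ₖ (1 : Matrix (Fin m) (Fin m) ℂ)
        + (1 : Matrix (Fin m) (Fin m) ℂ) ⊗ₖ (A k))
      ≤ ∑ j, p j * (If1 (ρa j) (A k) + If1 (ρb j) (A k)) := by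
    intro k
    have hH : ((A k) ⊗ₖ (1 : Matrix (Fin m) (Fin m) ℂ)
        + (1 : Matrix (Fin m) (Fin m) ℂ) ⊗ₖ (A k)).IsHermitian :=
      (kron_isHermitian (hAherm k) Matrix.isHermitian_one).add
        (kron_isHermitian Matrix.isHermitian_one (hAherm k))
    have h1 := hconv N p (fun j => (ρa j) ⊗ₖ (ρb j)) _ hp hpsum hprod hH
    rw [hsep]
    refine h1.trans (le_of_eq (Finset.sum_congr rfl fun j _ => ?_))
    rw [hadd (ρa j) (ρb j) (hρa j).1 (hρa j).2 (hρb j).1 (hρb j).2 (A k) (A k)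
      (hAherm k) (hAherm k)]
  calc ∑ k, If2 ρab ((A k) ⊗ₖ (1 : Matrix (Fin m) (Fin m) ℂ)
        + (1 : Matrix (Fin m) (Fin m) ℂ) ⊗ₖ (A k))
      ≤ ∑ k, ∑ j, p j * (If1 (ρa j) (A k) + If1 (ρb j) (A k)) :=
        Finset.sum_le_sum fun k _ => key k
    _ = ∑ j, p j * ((∑ k, If1 (ρa j) (A k)) + (∑ k, If1 (ρb j) (A k))) := by
        rw [Finset.sum_comm]
        exact Finset.sum_congr rfl fun j _ => by
          rw [← Finset.mul_sum, Finset.sum_add_distrib]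
    _ ≤ ∑ j, p j * (2 * m - 2) := by
        refine Finset.sum_le_sum fun j _ => mul_le_mul_of_nonneg_left ?_ (hp j)
        have := hQ (ρa j) (hρa j).1 (hρa j).2
        have := hQ (ρb j) (hρb j).1 (hρb j).2
        linarith
    _ = 2 * m - 2 := by rw [← Finset.sum_mul, hpsum, one_mul]
end
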